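/- Let V be a real vector space, Q a positive semidefinite symmetric bilinear form on V, and α a linear functional on V such that N := sup{ α(v) : v ∈ V, Q(v,v) ≤ 1 } is finite. Then inf_{v ∈ V} ( α(v) + Q(v,v) ) = −N²/4. -/

import Mathlib

/-- For a positive semidefinite symmetric bilinear form `Q` and a linear
functional `α` with finite `Q`-norm `N = sup { α v : Q v v ≤ 1 }`, the infimum of
`v ↦ α v + Q v v` equals `-N²/4`. -/
theorem quadratic_inf_eq
    {V : Type*} [AddCommGroup V] [Module ℝ V]
    (Q : V →ₗ[ℝ] V →ₗ[ℝ] ℝ) (hsymm : ∀ v w : V, Q v w = Q w v)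
    (hpos : ∀ v : V, 0 ≤ Q v v)
    (α : V →ₗ[ℝ] ℝ) (N : ℝ) (hN : IsLUB (⇑α '' {v : V | Q v v ≤ 1}) N) :
    IsGLB (Set.range fun v : V => α v + Q v v) (-(N ^ 2) / 4) := by
  have h0 : (0:ℝ) ∈ ⇑α '' {v : V | Q v v ≤ 1} := ⟨0, by simp, by simp⟩
  have hN0 : 0 ≤ N := hN.1 h0
  have hQs : ∀ (s : ℝ) (v : V), Q (s • v) (s • v) = s * (s * Q v v) := by
    intro s v; simp [map_smul]
  have key : ∀ v : V, α v ≤ N * Real.sqrt (Q v v) := by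
    intro v
    rcases eq_or_lt_of_le (hpos v) with h | h
    · rw [← h, Real.sqrt_zero, mul_zero]
      by_contra hlt
      push_neg at hlt
      have hmem : α (((N+1)/α v) • v) ≤ N := by
        apply hN.1
        refine ⟨_, ?_, rfl⟩
        show Q _ _ ≤ 1
        rw [hQs, ← h]; norm_num
      rw [map_smul, smul_eq_mul, div_mul_cancel₀ _ (ne_of_gt hlt)] at hmem
      linarith
    · set t := Real.sqrt (Q v v) with ht
      have htpos : 0 < t := Real.sqrt_pos.2 h
      have ht2 : t ^ 2 = Q v v := Real.sq_sqrt (le_of_lt h)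
      have hmem : α (t⁻¹ • v) ≤ N := by
        apply hN.1
        refine ⟨_, ?_, rfl⟩
        show Q _ _ ≤ 1
        rw [hQs, ← ht2]
        field_simp
        exact le_rfl
      rw [map_smul, smul_eq_mul] at hmem
      have := mul_le_mul_of_nonneg_left hmem (le_of_lt htpos)
      rw [← mul_assoc, mul_inv_cancel₀ (ne_of_gt htpos), one_mul] at this
      linarith
  constructor
  · rintro x ⟨v, rfl⟩
    have h1 := key (-v)
    have h2 : Q (-v) (-v) = Q v v := by simp
    rw [map_neg, h2] at h1
    have hs := Real.sq_sqrt (hpos v)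
    nlinarith [sq_nonneg (Real.sqrt (Q v v) - N/2), Real.sqrt_nonneg (Q v v)]
  · intro b hb
    by_contra hbgt
    push_neg at hbgt
    rcases eq_or_lt_of_le hN0 with h | h
    · have h0' := hb ⟨0, rfl⟩
      simp at h0'
      rw [← h] at hbgt
      norm_num at hbgt
      linarith
    · set δ := 2 * (b + N^2/4) / N with hδdef
      have hδ : 0 < δ := by
        apply div_pos _ h
        have : -(N ^ 2) / 4 < b := hbgt
        nlinarith
      obtain ⟨x, ⟨w, hw, rfl⟩, hx, _⟩ := hN.exists_between (by linarith : N - δ < N)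
      have hbl := hb ⟨(-(N/2)) • w, rfl⟩
      simp only [map_smul, LinearMap.smul_apply, smul_eq_mul] at hbl
      have hw1 : Q w w ≤ 1 := hw
      have hδN : δ * N = 2 * (b + N^2/4) := by
        rw [hδdef]; field_simp
      nlinarith [hpos w]
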